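/- Let (Ω, P) be a probability space, let d ≥ 1, a > 0, μ ∈ ℝ^d, and let N be a natural number with N ≥ 18·ln(6d). Let v_1,…,v_N : Ω → ℝ^d be independent random vectors such that for every i ∈ {1,…,N} and every coordinate j ∈ {1,…,d}, P[ |v_i[j] − μ_j| ≤ a ] ≥ 5/6. Then with probability at least 5/6, for every coordinate j strictly more than N/2 of the indices i satisfy |v_i[j] − μ_j| ≤ a; consequently, on this event every coordinatewise median m of v_1,…,v_N satisfies |m_j − μ_j| ≤ a for all j, i.e., ‖m − μ‖_∞ ≤ a. -/

import Mathlib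

open MeasureTheory ProbabilityTheory
open scoped Classical BigOperators

lemma log_nine_fifths : (1:ℝ)/9 ≤ Real.log (9/5) := by
  rw [Real.le_log_iff_exp_le (by norm_num)]
  have h : (8:ℝ)/9 ≤ Real.exp (-(1/9)) := by
    have := Real.add_one_le_exp (-(1/9:ℝ)); linarith
  have h2 : Real.exp ((1:ℝ)/9) ≤ 9/8 := by
    rw [show ((9:ℝ)/8) = ((8/9:ℝ))⁻¹ by norm_num,
      show Real.exp ((1:ℝ)/9) = (Real.exp (-(1/9)))⁻¹ by rw [Real.exp_neg, inv_inv]]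
    exact inv_anti₀ (by norm_num) h
  linarith

lemma chernoff_bernoulli {Ω : Type*} [MeasurableSpace Ω] (P : Measure Ω)
    [IsProbabilityMeasure P] {N : ℕ} (B : Fin N → Set Ω) (hB : ∀ i, MeasurableSet (B i))
    (hp : ∀ i, P (B i) ≤ ENNReal.ofReal (1/6))
    (hind : iIndepFun
      (fun i => (B i).indicator (fun _ => (1:ℝ))) P) :
    P {ω | (N:ℝ)/2 ≤ ∑ i, (B i).indicator (fun _ => (1:ℝ)) ω} ≤
      ENNReal.ofReal (Real.exp (-((N:ℝ)/2) * Real.log (9/5))) := by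
  set t : ℝ := Real.log 5 with ht_def
  have ht : 0 ≤ t := Real.log_nonneg (by norm_num)
  set X : Fin N → Ω → ℝ := fun i => (B i).indicator (fun _ => (1:ℝ)) with hX
  have key : ∀ i ω, Real.exp (t * X i ω)
      = (B i).indicator (fun _ => Real.exp t - 1) ω + 1 := by
    intro i ω
    by_cases h : ω ∈ B i
    · simp [hX, Set.indicator_of_mem h]
    · simp [hX, Set.indicator_of_notMem h]
  have hmeasX : ∀ i, Measurable (X i) := fun i => measurable_const.indicator (hB i)
  have h_int : ∀ i, Integrable (fun ω => Real.exp (t * X i ω)) P := by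
    intro i
    have : (fun ω => Real.exp (t * X i ω))
        = fun ω => (B i).indicator (fun _ => Real.exp t - 1) ω + 1 := funext (key i)
    rw [this]
    exact ((integrable_const _).indicator (hB i)).add (integrable_const 1)
  have hmgf : ∀ i, mgf (X i) P t ≤ 5/3 := by
    intro i
    have hpi : (P (B i)).toReal ≤ 1/6 := by
      refine ENNReal.toReal_le_of_le_ofReal (by norm_num) (hp i)
    have : mgf (X i) P t = (Real.exp t - 1) * (P (B i)).toReal + 1 := by
      rw [mgf]
      simp_rw [key i]
      rw [integral_add ((integrable_const _).indicator (hB i)) (integrable_const 1),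
        integral_indicator_const _ (hB i), integral_const]
      simp [smul_eq_mul, mul_comm, measureReal_def]
    rw [this, ht_def, Real.exp_log (by norm_num : (0:ℝ) < 5)]
    linarith
  have hmgfsum : mgf (∑ i, X i) P t ≤ (5/3 : ℝ) ^ N := by
    rw [hind.mgf_sum hmeasX]
    calc ∏ i, mgf (X i) P t ≤ ∏ _i : Fin N, (5/3 : ℝ) :=
          Finset.prod_le_prod (fun i _ => mgf_nonneg) (fun i _ => hmgf i)
      _ = (5/3 : ℝ) ^ N := by simp [div_pow]
  have hchern := measure_ge_le_exp_mul_mgf (μ := P) (X := ∑ i, X i) ((N:ℝ)/2) ht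
      (hind.integrable_exp_mul_sum hmeasX (fun i _ => h_int i))
  have hsum_eq : ∀ ω, (∑ i, X i) ω = ∑ i, X i ω := fun ω => by simp
  have hreal : (P {ω | (N:ℝ)/2 ≤ ∑ i, X i ω}).toReal
      ≤ Real.exp (-((N:ℝ)/2) * Real.log (9/5)) := by
    have hset : {ω | (N:ℝ)/2 ≤ ∑ i, X i ω} = {ω | (N:ℝ)/2 ≤ (∑ i, X i) ω} := by
      ext ω; simp
    rw [hset]
    refine hchern.trans ?_
    have hstep : Real.exp (-t * ((N:ℝ)/2)) * (5/3 : ℝ) ^ N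
        = Real.exp (-((N:ℝ)/2) * Real.log (9/5)) := by
      rw [show ((5:ℝ)/3) ^ N = Real.exp ((N:ℝ) * Real.log (5/3)) by
        rw [← Real.log_pow, Real.exp_log (by positivity)],
        ← Real.exp_add]
      congr 1
      have l1 : Real.log ((5:ℝ)/3) = Real.log 5 - Real.log 3 :=
        Real.log_div (by norm_num) (by norm_num)
      have l2 : Real.log ((9:ℝ)/5) = 2 * Real.log 3 - Real.log 5 := by
        rw [Real.log_div (by norm_num) (by norm_num),
          show (9:ℝ) = 3^2 by norm_num, Real.log_pow]
        push_cast; ring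
      rw [l1, l2, ht_def]; ring
    calc Real.exp (-t * ((N:ℝ)/2)) * mgf (∑ i, X i) P t
        ≤ Real.exp (-t * ((N:ℝ)/2)) * (5/3 : ℝ) ^ N := by
          gcongr
      _ = _ := hstep
  calc P {ω | (N:ℝ)/2 ≤ ∑ i, X i ω}
      = ENNReal.ofReal ((P {ω | (N:ℝ)/2 ≤ ∑ i, X i ω}).toReal) :=
        (ENNReal.ofReal_toReal (measure_ne_top _ _)).symm
    _ ≤ _ := ENNReal.ofReal_le_ofReal hreal

/-- median amplification. If each of `N ≥ 18·ln(6d)` independent random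
vectors has each coordinate within `a` of `μ` with probability at least `5/6`, then
with probability at least `5/6` every coordinate has strictly more than `N/2` good
indices; and on that event every coordinatewise median is within `a` of `μ` in
`ℓ_∞`-norm. -/
theorem median_amplification {Ω : Type*} [MeasurableSpace Ω]
    (P : Measure Ω) [IsProbabilityMeasure P]
    (d : ℕ) (hd : 1 ≤ d) (a : ℝ) (ha : 0 < a) (μ : Fin d → ℝ)
    (N : ℕ) (hN : 18 * Real.log (6 * d) ≤ (N : ℝ))
    (v : Fin N → Ω → Fin d → ℝ)
    (hmeas : ∀ i, Measurable (v i))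
    (hindep : iIndepFun v P)
    (hgood : ∀ i j, ENNReal.ofReal (5 / 6) ≤ P {ω | |v i ω j - μ j| ≤ a}) :
    ENNReal.ofReal (5 / 6) ≤ P {ω | ∀ j, (N : ℝ) / 2 <
        ((Finset.univ.filter fun i => |v i ω j - μ j| ≤ a).card : ℝ)} ∧
    ∀ ω, (∀ j, (N : ℝ) / 2 <
        ((Finset.univ.filter fun i => |v i ω j - μ j| ≤ a).card : ℝ)) →
      ∀ m : Fin d → ℝ,
        (∀ j, (N : ℝ) / 2 ≤ ((Finset.univ.filter fun i => v i ω j ≤ m j).card : ℝ) ∧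
              (N : ℝ) / 2 ≤ ((Finset.univ.filter fun i => m j ≤ v i ω j).card : ℝ)) →
        ∀ j, |m j - μ j| ≤ a := by
  constructor
  ·
    have hd0 : (0:ℝ) < 6 * d := by
      have : (1:ℝ) ≤ d := by exact_mod_cast hd
      linarith
    -- measurability of coordinates
    have hvm : ∀ i (j : Fin d), Measurable fun ω => |v i ω j - μ j| :=
      fun i j => (((measurable_pi_apply j).comp (hmeas i)).sub measurable_const).abs
    -- good sets and bad sets
    set Gset : Fin d → Set Ω := fun j =>
      {ω | (N : ℝ) / 2 < ((Finset.univ.filter fun i => |v i ω j - μ j| ≤ a).card : ℝ)}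
      with hGset
    set B : Fin d → Fin N → Set Ω := fun j i => {ω | a < |v i ω j - μ j|} with hBdef
    have hBmeas : ∀ j i, MeasurableSet (B j i) :=
      fun j i => measurableSet_lt measurable_const (hvm i j)
    -- per-coordinate bad probability
    have hp : ∀ j i, P (B j i) ≤ ENNReal.ofReal (1/6) := by
      intro j i
      have hGm : MeasurableSet {ω | |v i ω j - μ j| ≤ a} :=
        measurableSet_le (hvm i j) measurable_const
      have hcompl : B j i = {ω | |v i ω j - μ j| ≤ a}ᶜ := by
        ext ω; simp [hBdef, not_le]
      rw [hcompl, prob_compl_eq_one_sub hGm]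
      calc 1 - P {ω | |v i ω j - μ j| ≤ a} ≤ 1 - ENNReal.ofReal (5/6) :=
            tsub_le_tsub_left (hgood i j) 1
        _ = ENNReal.ofReal (1/6) := by
            rw [show (1 : ENNReal) = ENNReal.ofReal 1 by simp,
              ← ENNReal.ofReal_sub _ (by norm_num)]
            norm_num
    -- independence of indicators per coordinate
    have hind : ∀ j, iIndepFun
        (fun i => (B j i).indicator (fun _ => (1:ℝ))) P := by
      intro j
      have hS : MeasurableSet {y : Fin d → ℝ | a < |y j - μ j|} :=
        measurableSet_lt measurable_const ((measurable_pi_apply j).sub measurable_const).abs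
      have h := hindep.comp
        (fun _ => ({y : Fin d → ℝ | a < |y j - μ j|}).indicator (fun _ => (1:ℝ)))
        (fun _ => measurable_const.indicator hS)
      have heq : (fun i => (B j i).indicator (fun _ => (1:ℝ)))
          = fun i => (({y : Fin d → ℝ | a < |y j - μ j|}).indicator (fun _ => (1:ℝ))) ∘ v i := by
        funext i ω
        by_cases hmem : ω ∈ B j i
        · have h2 : v i ω ∈ {y : Fin d → ℝ | a < |y j - μ j|} := hmem
          simp [Set.indicator_of_mem hmem, Function.comp, Set.indicator_of_mem h2]
        · have h2 : v i ω ∉ {y : Fin d → ℝ | a < |y j - μ j|} := hmem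
          simp [Set.indicator_of_notMem hmem, Function.comp, Set.indicator_of_notMem h2]
      rw [heq]
      exact h
    -- per-coordinate tail bound
    have hexp : Real.exp (-((N:ℝ)/2) * Real.log (9/5)) ≤ 1 / (6*d) := by
      have hlog : Real.log (6*d) ≤ (N:ℝ)/18 := by linarith
      have hN0 : (0:ℝ) ≤ N := Nat.cast_nonneg N
      have h1 : Real.log (6*d) ≤ ((N:ℝ)/2) * Real.log (9/5) := by
        have := mul_le_mul_of_nonneg_left log_nine_fifths (by linarith : (0:ℝ) ≤ (N:ℝ)/2)
        calc Real.log (6*d) ≤ (N:ℝ)/18 := hlog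
          _ = ((N:ℝ)/2) * (1/9) := by ring
          _ ≤ ((N:ℝ)/2) * Real.log (9/5) := this
      calc Real.exp (-((N:ℝ)/2) * Real.log (9/5)) ≤ Real.exp (-Real.log (6*d)) := by
            apply Real.exp_le_exp.mpr; linarith
        _ = 1 / (6*d) := by rw [Real.exp_neg, Real.exp_log hd0, one_div]
    have hbad : ∀ j, P (Gset j)ᶜ ≤ ENNReal.ofReal (1/(6*d)) := by
      intro j
      have hsub : (Gset j)ᶜ ⊆ {ω | (N:ℝ)/2 ≤ ∑ i, (B j i).indicator (fun _ => (1:ℝ)) ω} := by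
        intro ω hω
        simp only [hGset, Set.mem_compl_iff, Set.mem_setOf_eq, not_lt] at hω
        have hsum : ∑ i, (B j i).indicator (fun _ => (1:ℝ)) ω
            = ((Finset.univ.filter fun i => a < |v i ω j - μ j|).card : ℝ) := by
          rw [← Finset.sum_boole]
          refine Finset.sum_congr rfl fun i _ => ?_
          by_cases hmem : ω ∈ B j i
          · simp [Set.indicator_of_mem hmem, if_pos (show a < |v i ω j - μ j| from hmem)]
          · simp [Set.indicator_of_notMem hmem,
              if_neg (show ¬ a < |v i ω j - μ j| from hmem)]
        have hcount := Finset.card_filter_add_card_filter_not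
          (s := (Finset.univ : Finset (Fin N))) (p := fun i => |v i ω j - μ j| ≤ a)
        simp only [Finset.card_univ, Fintype.card_fin, not_le] at hcount
        have hcount' : ((Finset.univ.filter fun i => |v i ω j - μ j| ≤ a).card : ℝ)
            + ((Finset.univ.filter fun i => a < |v i ω j - μ j|).card : ℝ) = N := by
          exact_mod_cast hcount
        simp only [Set.mem_setOf_eq, hsum]
        linarith
      calc P (Gset j)ᶜ ≤ P {ω | (N:ℝ)/2 ≤ ∑ i, (B j i).indicator (fun _ => (1:ℝ)) ω} :=
            measure_mono hsub
        _ ≤ ENNReal.ofReal (Real.exp (-((N:ℝ)/2) * Real.log (9/5))) :=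
            chernoff_bernoulli P (B j) (hBmeas j) (hp j) (hind j)
        _ ≤ ENNReal.ofReal (1/(6*d)) := ENNReal.ofReal_le_ofReal hexp
    -- measurability of the good event
    have hGm : ∀ j, MeasurableSet (Gset j) := by
      intro j
      have hf : Measurable fun ω =>
          ((Finset.univ.filter fun i => |v i ω j - μ j| ≤ a).card : ℝ) := by
        have : (fun ω => ((Finset.univ.filter fun i => |v i ω j - μ j| ≤ a).card : ℝ))
            = fun ω => ∑ i, if |v i ω j - μ j| ≤ a then (1:ℝ) else 0 := by
          funext ω; rw [Finset.sum_boole]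
        rw [this]
        refine Finset.measurable_sum _ fun i _ => ?_
        exact Measurable.ite (measurableSet_le (hvm i j) measurable_const)
          measurable_const measurable_const
      exact measurableSet_lt measurable_const hf
    have hGmAll : MeasurableSet {ω | ∀ j, (N : ℝ) / 2 <
        ((Finset.univ.filter fun i => |v i ω j - μ j| ≤ a).card : ℝ)} := by
      have : {ω | ∀ j, (N : ℝ) / 2 <
          ((Finset.univ.filter fun i => |v i ω j - μ j| ≤ a).card : ℝ)} = ⋂ j, Gset j := by
        ext ω; simp [hGset]
      rw [this]; exact MeasurableSet.iInter hGm
    -- union bound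
    have hcomplsub : {ω | ∀ j, (N : ℝ) / 2 <
        ((Finset.univ.filter fun i => |v i ω j - μ j| ≤ a).card : ℝ)}ᶜ ⊆ ⋃ j, (Gset j)ᶜ := by
      intro ω hω
      simp only [Set.mem_compl_iff, Set.mem_setOf_eq, not_forall] at hω
      obtain ⟨j, hj⟩ := hω
      exact Set.mem_iUnion.mpr ⟨j, hj⟩
    have hunion : P {ω | ∀ j, (N : ℝ) / 2 <
        ((Finset.univ.filter fun i => |v i ω j - μ j| ≤ a).card : ℝ)}ᶜ
        ≤ ENNReal.ofReal (1/6) := by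
      calc P _ ≤ P (⋃ j, (Gset j)ᶜ) := measure_mono hcomplsub
        _ ≤ ∑' j, P (Gset j)ᶜ := measure_iUnion_le _
        _ = ∑ j, P (Gset j)ᶜ := tsum_fintype _
        _ ≤ ∑ _j : Fin d, ENNReal.ofReal (1/(6*d)) := Finset.sum_le_sum fun j _ => hbad j
        _ = (d : ENNReal) * ENNReal.ofReal (1/(6*d)) := by
            rw [Finset.sum_const, Finset.card_univ, Fintype.card_fin, nsmul_eq_mul]
        _ = ENNReal.ofReal (d * (1/(6*d))) := by
            rw [ENNReal.ofReal_mul (Nat.cast_nonneg d), ENNReal.ofReal_natCast]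
        _ = ENNReal.ofReal (1/6) := by
            congr 1
            field_simp
    have hfin := prob_compl_eq_one_sub (μ := P) hGmAll.compl
    rw [compl_compl] at hfin
    rw [hfin]
    calc ENNReal.ofReal (5/6 : ℝ) = 1 - ENNReal.ofReal (1/6) := by
          rw [show (1 : ENNReal) = ENNReal.ofReal 1 by simp,
            ← ENNReal.ofReal_sub _ (by norm_num)]
          norm_num
      _ ≤ 1 - P _ := tsub_le_tsub_left hunion 1
  ·
    intro ω hω m hm j
    set G := Finset.univ.filter fun i => |v i ω j - μ j| ≤ a with hGdef
    have hG : (N : ℝ) / 2 < G.card := hω j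
    have key : ∀ (T : Finset (Fin N)), (N:ℝ)/2 ≤ T.card → (G ∩ T).Nonempty := by
      intro T hT
      by_contra h
      rw [Finset.not_nonempty_iff_eq_empty] at h
      have h1 := Finset.card_union_add_card_inter G T
      rw [h] at h1
      have h2 : (G ∪ T).card ≤ N := by
        simpa using Finset.card_le_univ (G ∪ T)
      have h3 : ((G ∪ T).card : ℝ) = (G.card : ℝ) + T.card := by
        rw [Finset.card_empty] at h1
        have h1' : (G ∪ T).card = G.card + T.card := by omega
        exact_mod_cast h1'
      have h4 : ((G ∪ T).card : ℝ) ≤ N := by exact_mod_cast h2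
      linarith
    obtain ⟨i₁, hi₁⟩ := key _ (hm j).1
    obtain ⟨i₂, hi₂⟩ := key _ (hm j).2
    rw [Finset.mem_inter, hGdef, Finset.mem_filter, Finset.mem_filter] at hi₁ hi₂
    have e1 := abs_le.mp hi₁.1.2
    have e2 := abs_le.mp hi₂.1.2
    have f1 : v i₁ ω j ≤ m j := by simpa using hi₁.2.2
    have f2 : m j ≤ v i₂ ω j := by simpa using hi₂.2.2
    rw [abs_le]
    constructor <;> linarith
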